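/- arXiv:1902.05992 — 5 statements merged into one kernel-verified Lean document; each statement's English description precedes it below -/
import Mathlib

section
/- Let K be a field of characteristic ≠ 2, g ≥ 1 odd, and a, α ∈ K with α ≠ 0. If (x, y) is an affine point with x ≠ 0 on the curve X: y² = x^{2g+1} + a x^{g+1} + α^g x, then setting ξ = x + α/x and η = (y / x^{(g−1)/2}) · (1 − α/x²), the point (ξ, η) satisfies η² = (ξ² − 4α)·(D_g(ξ, α) + a), where D_g is the Dickson polynomial of the first kind. -/
open Polynomial in
lemma dickson_eval_add' {K : Type*} [CommRing K] (α x y : K) (h : x * y = α) :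
    ∀ n, (Polynomial.dickson 1 α n).eval (x + y) = x ^ n + y ^ n
  | 0 => by simp [Polynomial.dickson_zero]; norm_num
  | 1 => by simp [Polynomial.dickson_one]
  | (n + 2) => by
    simp only [Polynomial.dickson_add_two, eval_sub, eval_mul, eval_X, eval_C,
      dickson_eval_add' α x y h (n + 1), dickson_eval_add' α x y h n]
    subst h; ring

/-- Quotient map computation (odd genus): if `(x,y)` with `x ≠ 0` lies on
`X : y² = x^{2g+1} + a x^{g+1} + α^g x` then `ξ = x + α/x`,
`η = (y/x^{(g−1)/2})(1 − α/x²)` satisfy `η² = (ξ² − 4α)(D_g(ξ, α) + a)`. -/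
theorem quotient_odd_omega_sigma {K : Type*} [Field K] (hK : (2 : K) ≠ 0)
    (g : ℕ) (hg : 1 ≤ g) (hodd : Odd g) (a α : K) (hα : α ≠ 0)
    (x y : K) (hx : x ≠ 0)
    (hxy : y ^ 2 = x ^ (2 * g + 1) + a * x ^ (g + 1) + α ^ g * x) :
    ((y / x ^ ((g - 1) / 2)) * (1 - α / x ^ 2)) ^ 2 =
      ((x + α / x) ^ 2 - 4 * α) *
        ((Polynomial.dickson 1 α g).eval (x + α / x) + a) := by
  obtain ⟨m, rfl⟩ := hodd
  have hdiv : (2 * m + 1 - 1) / 2 = m := by omega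
  rw [hdiv, dickson_eval_add' α x (α / x) (by field_simp)]
  field_simp
  ring_nf
  ring_nf at hxy
  rw [hxy]
  simp only [inv_pow, mul_assoc]
  field_simp
  ring
end

section
/- Let K be a field of characteristic ≠ 2, g ≥ 2 even, a ∈ K, and α ∈ K a nonzero element with a square root √α ∈ K. If (x, y) is an affine point with x ≠ 0 on the curve X: y² = x^{2g+1} + a x^{g+1} + α^g x, then setting ξ = x + α/x and η = (y / x^{g/2}) · (1 − √α/x), the point (ξ, η) satisfies η² = (ξ − 2√α)·(D_g(ξ, α) + a). -/
lemma dickson_eval_add_aux {K : Type*} [CommRing K] (α u v : K) (h : u * v = α) :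
    ∀ n, (Polynomial.dickson 1 α n).eval (u + v) = u ^ n + v ^ n
  | 0 => by simp [Polynomial.dickson_zero]; norm_num
  | 1 => by simp [Polynomial.dickson_one]
  | n + 2 => by
    simp only [Polynomial.dickson_add_two, Polynomial.eval_sub, Polynomial.eval_mul,
      Polynomial.eval_X, Polynomial.eval_C, dickson_eval_add_aux α u v h (n + 1),
      dickson_eval_add_aux α u v h n]
    subst h; ring

/-- Quotient map computation (even genus): if `(x,y)` with `x ≠ 0` lies on
`X : y² = x^{2g+1} + a x^{g+1} + α^g x` then `ξ = x + α/x`,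
`η = (y/x^{g/2})(1 − √α/x)` satisfy `η² = (ξ − 2√α)(D_g(ξ, α) + a)`. -/
theorem quotient_even_omega_sigma {K : Type*} [Field K] (hK : (2 : K) ≠ 0)
    (g : ℕ) (hg : 2 ≤ g) (heven : Even g) (a α s : K) (hα : α ≠ 0) (hs : s ^ 2 = α)
    (x y : K) (hx : x ≠ 0)
    (hxy : y ^ 2 = x ^ (2 * g + 1) + a * x ^ (g + 1) + α ^ g * x) :
    ((y / x ^ (g / 2)) * (1 - s / x)) ^ 2 =
      ((x + α / x) - 2 * s) *
        ((Polynomial.dickson 1 α g).eval (x + α / x) + a) := by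
  obtain ⟨k, hk⟩ := heven
  have huv : x * (α / x) = α := by field_simp
  rw [dickson_eval_add_aux α x (α / x) huv g]
  subst hk
  have hgd : (k + k) / 2 = k := by omega
  rw [hgd]
  subst hs
  have hs0 : s ≠ 0 := by intro h; apply hα; rw [h]; ring
  rw [show ((y / x ^ k) * (1 - s / x)) ^ 2 = y ^ 2 * (1 - s / x) ^ 2 / (x ^ k) ^ 2 by ring,
    hxy]
  simp only [div_pow]
  field_simp
  ring
end

section
/- Let K be a field of characteristic ≠ 2, g ≥ 1 odd, and a, α ∈ K with α ≠ 0. The map σ: (x, y) ↦ (α/x, y·α^{(g+1)/2}/x^{g+1}) sends affine points with x ≠ 0 of the curve X: y² = x^{2g+1} + a x^{g+1} + α^g x to points of X, and σ∘σ is the identity on such points. -/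
/-- The map `σ : (x,y) ↦ (α/x, y·α^{(g+1)/2}/x^{g+1})` sends affine points with `x ≠ 0` of
`X : y² = x^{2g+1} + a x^{g+1} + α^g x` to points of `X`, and is an involution. -/
theorem involution_sigma_on_curve {K : Type*} [Field K] (hK : (2 : K) ≠ 0)
    (g : ℕ) (hg : 1 ≤ g) (hodd : Odd g) (a α : K) (hα : α ≠ 0)
    (x y : K) (hx : x ≠ 0)
    (hxy : y ^ 2 = x ^ (2 * g + 1) + a * x ^ (g + 1) + α ^ g * x) :
    ((y * α ^ ((g + 1) / 2) / x ^ (g + 1)) ^ 2 =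
        (α / x) ^ (2 * g + 1) + a * (α / x) ^ (g + 1) + α ^ g * (α / x)) ∧
      (α / (α / x) = x ∧
        (y * α ^ ((g + 1) / 2) / x ^ (g + 1)) * α ^ ((g + 1) / 2) / (α / x) ^ (g + 1) = y) := by
  obtain ⟨k, rfl⟩ := hodd
  have h2 : (2 * k + 1 + 1) / 2 = k + 1 := by omega
  rw [h2]
  refine ⟨?_, ?_, ?_⟩
  · field_simp
    rw [div_pow, div_pow, hxy]
    field_simp
    ring
  · field_simp
  · field_simp
    rw [div_pow]
    field_simp
    ring
end

section
/- Let m, g, N be natural numbers with g ≥ 1, N ≡ m (mod g), and m ≤ N. Then the coefficient of x^N in (x^{2g+1} + a x^{g+1} + b x)^m over any commutative ring equals the sum over k₀ ≥ 0 (with m + (m−N)/g + k₀ ≥ 0 and (N−m)/g − 2k₀ ≥ 0) of the multinomial coefficient m! / (k₀! · ((N−m)/g − 2k₀)! · (m + (m−N)/g + k₀)!) times a^{(N−m)/g − 2k₀} · b^{m + (m−N)/g + k₀}. -/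
open Polynomial Finset

lemma aux_linear_pow {R : Type*} [CommRing R] (a b : R) (n t : ℕ) :
    ((C a * X + C b) ^ n).coeff t = n.choose t * a ^ t * b ^ (n - t) := by
  rw [add_pow, Polynomial.finset_sum_coeff]
  have h : ∀ i ∈ Finset.range (n+1),
      ((C a * X) ^ i * C b ^ (n - i) * (n.choose i : R[X])).coeff t
      = if t = i then (n.choose i : R) * a ^ i * b ^ (n - i) else 0 := by
    intro i _
    have e : (C a * X) ^ i * C b ^ (n - i) * (n.choose i : R[X])
        = C ((n.choose i : R) * (a ^ i * b ^ (n - i))) * X ^ i := by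
      rw [mul_pow, ← C_pow, ← C_pow, ← C_eq_natCast, C_mul, C_mul]
      ring
    rw [e, coeff_C_mul, coeff_X_pow]
    split <;> simp [mul_assoc]
  rw [Finset.sum_congr rfl h, Finset.sum_ite_eq]
  by_cases h : t ∈ Finset.range (n+1)
  · simp [h]
  · simp only [h, if_false]
    have : n.choose t = 0 := Nat.choose_eq_zero_of_lt (by simpa using h)
    simp [this]

lemma aux_fact (m k j l : ℕ) (h : k + j + l = m) :
    m.factorial / (k.factorial * j.factorial * l.factorial)
      = m.choose k * (m - k).choose j := by
  have hk : k ≤ m := by omega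
  have hj : j ≤ m - k := by omega
  have hl : l = m - k - j := by omega
  subst hl
  have h1 := Nat.choose_mul_factorial_mul_factorial hk
  have h2 := Nat.choose_mul_factorial_mul_factorial hj
  refine Nat.div_eq_of_eq_mul_left (by positivity) ?_
  calc m.factorial = m.choose k * k.factorial * (m - k).factorial := h1.symm
    _ = m.choose k * k.factorial * ((m-k).choose j * j.factorial * (m-k-j).factorial) := by
        rw [h2]
    _ = m.choose k * (m - k).choose j * (k.factorial * j.factorial * (m-k-j).factorial) := by
        ring

lemma aux_quad_pow {R : Type*} [CommRing R] (a b : R) (m D : ℕ) :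
    ((X ^ 2 + C a * X + C b) ^ m).coeff D =
      ∑ k ∈ Finset.range (D + 1),
        if 2 * k ≤ D ∧ D ≤ m + k then
          ((Nat.factorial m /
              (Nat.factorial k * Nat.factorial (D - 2 * k) *
                Nat.factorial (m + k - D)) : ℕ) : R) *
            a ^ (D - 2 * k) * b ^ (m + k - D)
        else 0 := by
  set M := max m D with hM
  have key : ((X ^ 2 + C a * X + C b) ^ m).coeff D =
      ∑ j ∈ Finset.range (m + 1),
        if 2 * j ≤ D then
          ((m.choose j : R) * ((m - j).choose (D - 2 * j)) * a ^ (D - 2*j) * b ^ (m - j - (D - 2*j)))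
        else 0 := by
    have e : (X ^ 2 + C a * X + C b : R[X]) = X ^ 2 + (C a * X + C b) := by ring
    rw [e, add_pow, Polynomial.finset_sum_coeff]
    refine Finset.sum_congr rfl ?_
    intro j hj
    have e2 : (X ^ 2 : R[X]) ^ j * (C a * X + C b) ^ (m - j) * (m.choose j : R[X])
        = ((C a * X + C b) ^ (m - j) * (m.choose j : R[X])) * X ^ (2 * j) := by
      rw [← pow_mul]; ring
    rw [e2, Polynomial.coeff_mul_X_pow']
    by_cases h2j : 2 * j ≤ D
    · simp only [h2j, if_true]
      rw [← C_eq_natCast, Polynomial.coeff_mul_C, aux_linear_pow]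
      push_cast
      ring
    · simp [h2j]
  rw [key]
  have ext1 : ∑ j ∈ Finset.range (m + 1),
        (if 2 * j ≤ D then
          ((m.choose j : R) * ((m - j).choose (D - 2 * j)) * a ^ (D - 2*j) * b ^ (m - j - (D - 2*j)))
        else 0)
      = ∑ j ∈ Finset.range (M + 1),
        (if 2 * j ≤ D then
          ((m.choose j : R) * ((m - j).choose (D - 2 * j)) * a ^ (D - 2*j) * b ^ (m - j - (D - 2*j)))
        else 0) := by
    refine Finset.sum_subset (Finset.range_subset_range.2 (by omega)) ?_
    intro j _ hj
    have : m < j := by simpa using hj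
    have hc : m.choose j = 0 := Nat.choose_eq_zero_of_lt this
    simp [hc]
  have ext2 : ∑ k ∈ Finset.range (D + 1),
        (if 2 * k ≤ D ∧ D ≤ m + k then
          ((Nat.factorial m /
              (Nat.factorial k * Nat.factorial (D - 2 * k) *
                Nat.factorial (m + k - D)) : ℕ) : R) *
            a ^ (D - 2 * k) * b ^ (m + k - D)
        else 0)
      = ∑ k ∈ Finset.range (M + 1),
        (if 2 * k ≤ D ∧ D ≤ m + k then
          ((Nat.factorial m /
              (Nat.factorial k * Nat.factorial (D - 2 * k) *
                Nat.factorial (m + k - D)) : ℕ) : R) *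
            a ^ (D - 2 * k) * b ^ (m + k - D)
        else 0) := by
    refine Finset.sum_subset (Finset.range_subset_range.2 (by omega)) ?_
    intro k _ hk
    have : D < k := by simpa using hk
    have : ¬ (2 * k ≤ D ∧ D ≤ m + k) := by omega
    simp [this]
  rw [ext1, ext2]
  refine Finset.sum_congr rfl ?_
  intro k _
  by_cases h1 : 2 * k ≤ D
  · by_cases h2 : D ≤ m + k
    · simp only [h1, h2, and_self, if_true]
      rw [aux_fact m k (D - 2*k) (m + k - D) (by omega)]
      have hb : m - k - (D - 2*k) = m + k - D := by omega
      rw [hb]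
      push_cast
      ring
    · by_cases hkm : k ≤ m
      · have hc : (m - k).choose (D - 2*k) = 0 := Nat.choose_eq_zero_of_lt (by omega)
        simp [h1, h2, hc]
      · have hc : m.choose k = 0 := Nat.choose_eq_zero_of_lt (by omega)
        simp [h1, h2, hc]
  · simp [h1]


/-- Multinomial expansion of the coefficient of `x^N` in `(x^{2g+1} + a x^{g+1} + b x)^m`,
for `N ≡ m (mod g)` and `m ≤ N`, as a sum over `k₀` of
`m!/(k₀!·((N−m)/g − 2k₀)!·(m + k₀ − (N−m)/g)!) · a^{(N−m)/g − 2k₀} · b^{m + k₀ − (N−m)/g}`. -/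
theorem coeff_eq_multinomial_sum {R : Type*} [CommRing R] (a b : R)
    (m g N : ℕ) (hg : 1 ≤ g) (hmN : m ≤ N) (hdvd : g ∣ N - m) :
    ((Polynomial.X ^ (2 * g + 1) + Polynomial.C a * Polynomial.X ^ (g + 1)
        + Polynomial.C b * Polynomial.X) ^ m).coeff N =
      ∑ k ∈ Finset.range ((N - m) / g + 1),
        if 2 * k ≤ (N - m) / g ∧ (N - m) / g ≤ m + k then
          ((Nat.factorial m /
              (Nat.factorial k * Nat.factorial ((N - m) / g - 2 * k) *
                Nat.factorial (m + k - (N - m) / g)) : ℕ) : R) *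
            a ^ ((N - m) / g - 2 * k) * b ^ (m + k - (N - m) / g)
        else 0 := by
  have hg0 : 0 < g := hg
  have e1 : (X ^ (2 * g + 1) + C a * X ^ (g + 1) + C b * X : R[X])
      = (Polynomial.expand R g) (X ^ 2 + C a * X + C b) * X := by
    simp only [map_add, map_mul, map_pow, Polynomial.expand_X, Polynomial.expand_C]
    ring
  rw [e1, mul_pow, ← map_pow, Polynomial.coeff_mul_X_pow', if_pos hmN,
    Polynomial.coeff_expand hg0, if_pos hdvd, aux_quad_pow]
end

section
/- Let W be an n×n matrix over a commutative ring whose nonzero entries are supported on a permutation, i.e., W_{i,j} = 0 unless j = σ(i) for a permutation σ of {1,...,n}. If σ decomposes into disjoint cycles σ₁, ..., σ_k of lengths ℓ₁, ..., ℓ_k, then the characteristic polynomial of W equals ∏_{i=1}^{k} (T^{ℓ_i} − ∏_{j} W_{σ_i^j(m_i), σ_i^{j+1}(m_i)}), where for each cycle σ_i, m_i is any element of its support and the inner product is over one full traversal of the cycle. -/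
open Polynomial

section Aux
open Equiv Equiv.Perm Finset

variable {α : Type*} [Fintype α] [DecidableEq α]

private theorem comm_of_subset {σ : Perm α} {S : Finset (Perm α)}
    (hS : S ⊆ σ.cycleFactorsFinset) :
    (S : Set (Perm α)).Pairwise fun a b => Commute (id a) (id b) :=
  fun _ ha _ hb hab =>
    ((σ.cycleFactorsFinset_pairwise_disjoint) (hS ha) (hS hb) hab).commute

private theorem cff_noncommProd {σ : Perm α} {S : Finset (Perm α)}
    (hS : S ⊆ σ.cycleFactorsFinset) :
    (S.noncommProd id (comm_of_subset hS)).cycleFactorsFinset = S := by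
  rw [cycleFactorsFinset_eq_finset]
  refine ⟨fun f hf => (mem_cycleFactorsFinset_iff.mp (hS hf)).1, ?_, rfl⟩
  exact fun a ha b hb hab =>
    (σ.cycleFactorsFinset_pairwise_disjoint) (hS ha) (hS hb) hab

private theorem support_noncommProd' {σ : Perm α} {S : Finset (Perm α)}
    (hS : S ⊆ σ.cycleFactorsFinset) :
    (S.noncommProd id (comm_of_subset hS)).support = S.biUnion Equiv.Perm.support :=
  support_noncommProd fun a ha b hb hab =>
    (σ.cycleFactorsFinset_pairwise_disjoint) (hS ha) (hS hb) hab

private theorem apply_noncommProd_mem {σ : Perm α} {S : Finset (Perm α)}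
    (hS : S ⊆ σ.cycleFactorsFinset) {c : Perm α} (hc : c ∈ S) {x : α}
    (hx : x ∈ c.support) : (S.noncommProd id (comm_of_subset hS)) x = σ x := by
  have h1 := (mem_cycleFactorsFinset_iff.mp (by rw [cff_noncommProd hS]; exact hc)).2 x hx
  have h2 := (mem_cycleFactorsFinset_iff.mp (hS hc)).2 x hx
  rw [← h1, h2]

private theorem apply_noncommProd_not_mem {σ : Perm α} {S : Finset (Perm α)}
    (hS : S ⊆ σ.cycleFactorsFinset) {x : α}
    (hx : x ∉ S.biUnion Equiv.Perm.support) :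
    (S.noncommProd id (comm_of_subset hS)) x = x := by
  rw [← notMem_support, support_noncommProd' hS]; exact hx

private theorem sign_noncommProd' {σ : Perm α} {S : Finset (Perm α)}
    (hS : S ⊆ σ.cycleFactorsFinset) :
    Equiv.Perm.sign (S.noncommProd id (comm_of_subset hS)) =
      ∏ c ∈ S, Equiv.Perm.sign c := by
  rw [Finset.map_noncommProd (g := (Equiv.Perm.sign : Perm α →* ℤˣ)),
    Finset.noncommProd_eq_prod]
  rfl

private theorem dichotomy {σ τ : Perm α} (hτ : ∀ i, τ i = i ∨ τ i = σ i)
    {c : Perm α} (hc : c ∈ σ.cycleFactorsFinset) {x : α} (hx : x ∈ c.support)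
    (h : τ x = σ x) : ∀ y ∈ c.support, τ y = σ y := by
  have hcyc : c.IsCycle := (mem_cycleFactorsFinset_iff.mp hc).1
  have hcs : ∀ a ∈ c.support, c a = σ a := (mem_cycleFactorsFinset_iff.mp hc).2
  have key : ∀ k : ℕ, τ ((c ^ k) x) = σ ((c ^ k) x) := by
    intro k
    induction k with
    | zero => simpa using h
    | succ k ih =>
      set a := (c ^ k) x with ha
      have hak : a ∈ c.support := by
        rw [ha]; exact pow_apply_mem_support.mpr hx
      have hb : (c ^ (k+1)) x = σ a := by
        rw [pow_succ', Equiv.Perm.mul_apply, ← ha, hcs a hak]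
      rcases hτ ((c ^ (k+1)) x) with h1 | h1
      · exfalso
        have : τ ((c ^ (k+1)) x) = τ a := by rw [h1, hb, ← ih]
        have haa : (c ^ (k+1)) x = a := τ.injective this
        rw [hb] at haa
        rw [← hcs a hak] at haa
        exact (mem_support.mp hak) haa
      · exact h1
  intro y hy
  obtain ⟨k, hk⟩ := hcyc.exists_pow_eq (mem_support.mp hx) (mem_support.mp hy)
  rw [← hk]; exact key k

private theorem classify' {σ τ : Perm α} (hτ : ∀ i, τ i = i ∨ τ i = σ i) :
    τ = (σ.cycleFactorsFinset.filter
        (fun c => ∀ i ∈ c.support, τ i = σ i)).noncommProd id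
        (comm_of_subset (filter_subset _ _)) := by
  set S := σ.cycleFactorsFinset.filter (fun c => ∀ i ∈ c.support, τ i = σ i) with hSdef
  have hS : S ⊆ σ.cycleFactorsFinset := filter_subset _ _
  ext x
  by_cases hx : x ∈ S.biUnion Equiv.Perm.support
  · obtain ⟨c, hcS, hxc⟩ := Finset.mem_biUnion.mp hx
    rw [apply_noncommProd_mem hS hcS hxc]
    exact (Finset.mem_filter.mp hcS).2 x hxc
  · rw [apply_noncommProd_not_mem hS hx]
    rcases hτ x with h | h
    · exact h
    by_cases hfix : σ x = x
    · rw [h, hfix]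
    · exfalso
      have hxs : x ∈ σ.support := mem_support.mpr hfix
      have hcf : σ.cycleOf x ∈ σ.cycleFactorsFinset :=
        cycleOf_mem_cycleFactorsFinset_iff.mpr hxs
      have hxc : x ∈ (σ.cycleOf x).support :=
        mem_support_cycleOf_iff.mpr ⟨SameCycle.refl _ _, hxs⟩
      have : σ.cycleOf x ∈ S :=
        Finset.mem_filter.mpr ⟨hcf, dichotomy hτ hcf hxc h⟩
      exact hx (Finset.mem_biUnion.mpr ⟨_, this, hxc⟩)

private theorem classify {σ τ : Perm α} (hτ : ∀ i, τ i = i ∨ τ i = σ i) :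
    ∃ (S : Finset (Perm α)) (hS : S ⊆ σ.cycleFactorsFinset),
      τ = S.noncommProd id (comm_of_subset hS) :=
  ⟨_, filter_subset _ _, classify' hτ⟩

private theorem cycle_traverse_prod {R : Type*} [CommRing R] {c : Perm α}
    (hc : c.IsCycle) {x : α} (hx : x ∈ c.support) (f : α → α → R) :
    ∏ j ∈ Finset.range c.support.card, f ((c ^ j) x) ((c ^ (j + 1)) x) =
      ∏ i ∈ c.support, f i (c i) := by
  have hco : c.IsCycleOn ↑c.support := by
    rw [coe_support_eq_set_support]; exact hc.isCycleOn
  refine Finset.prod_bij (fun j _ => (c ^ j) x) ?_ ?_ ?_ ?_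
  · intro j _; exact pow_apply_mem_support.mpr hx
  · intro a ha b hb hab
    rw [hco.pow_apply_eq_pow_apply hx] at hab
    rw [Finset.mem_range] at ha hb
    rwa [Nat.ModEq, Nat.mod_eq_of_lt ha, Nat.mod_eq_of_lt hb] at hab
  · intro y hy
    obtain ⟨k, hk, hky⟩ := hco.exists_pow_eq hx hy
    exact ⟨k, Finset.mem_range.mpr hk, hky⟩
  · intro j _
    rw [pow_succ', Equiv.Perm.mul_apply]

end Aux

open Equiv Equiv.Perm Finset in
/-- The characteristic polynomial of a generalized permutation matrix factors according to
the cycle decomposition of the underlying permutation: fixed points contribute linear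
factors `T − W i i` and each nontrivial cycle `c` of length `ℓ` contributes
`T^ℓ − ∏_j W_{c^j(m), c^{j+1}(m)}` for any point `m` of its support. -/
theorem charpoly_of_generalized_perm {R : Type*} [CommRing R] {n : ℕ}
    (W : Matrix (Fin n) (Fin n) R) (σ : Equiv.Perm (Fin n))
    (hW : ∀ i j, j ≠ σ i → W i j = 0)
    (m : Equiv.Perm (Fin n) → Fin n)
    (hm : ∀ c ∈ σ.cycleFactorsFinset, m c ∈ c.support) :
    W.charpoly =
      (∏ i ∈ Finset.univ.filter (fun i => σ i = i), (X - C (W i i))) *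
        ∏ c ∈ σ.cycleFactorsFinset,
          (X ^ c.support.card -
            C (∏ j ∈ Finset.range c.support.card,
              W ((c ^ j) (m c)) ((c ^ (j + 1)) (m c)))) := by
  classical
  set F0 : R[X] := ∏ i ∈ Finset.univ.filter (fun i => σ i = i), (X - C (W i i)) with hF0
  set Q : Perm (Fin n) → R := fun c => ∏ i ∈ c.support, W i (σ i) with hQ
  have hsupp : σ.support = σ.cycleFactorsFinset.biUnion Equiv.Perm.support := by
    conv_lhs => rw [← cycleFactorsFinset_noncommProd σ]
    exact support_noncommProd (σ.cycleFactorsFinset_pairwise_disjoint)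
  have hdisj : (↑σ.cycleFactorsFinset : Set (Perm (Fin n))).PairwiseDisjoint
      Equiv.Perm.support := fun a ha b hb hab =>
    ((σ.cycleFactorsFinset_pairwise_disjoint) ha hb hab).disjoint_support
  have hfilter : Finset.univ.filter (fun i => σ i = i) = σ.supportᶜ := by
    ext i; simp [Equiv.Perm.mem_support, eq_comm]
  -- step 1: determinant expansion
  have h1 : W.charpoly = ∑ τ : Perm (Fin n),
      ((Equiv.Perm.sign τ : ℤ) : R[X]) * ∏ i, (Matrix.charmatrix W) i (τ i) := by
    rw [Matrix.charpoly, ← Matrix.det_transpose, Matrix.det_apply']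
    simp only [Matrix.transpose_apply]
  -- the term for the permutation coming from a subset S
  have hterm : ∀ (S : Finset (Perm (Fin n))) (hS : S ⊆ σ.cycleFactorsFinset),
      ((Equiv.Perm.sign (S.noncommProd id (comm_of_subset hS)) : ℤ) : R[X]) *
          ∏ i, (Matrix.charmatrix W) i ((S.noncommProd id (comm_of_subset hS)) i) =
        F0 * ((∏ c ∈ S, (-(C (Q c)))) *
          ∏ c ∈ σ.cycleFactorsFinset \ S, X ^ c.support.card) := by
    intro S hS
    set τ := S.noncommProd id (comm_of_subset hS) with hτdef
    have hSb : S.biUnion Equiv.Perm.support ⊆ σ.support := by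
      rw [hsupp]; exact biUnion_subset_biUnion_of_subset_left _ hS
    -- fixed part
    have hfix : ∏ i ∈ σ.supportᶜ, (Matrix.charmatrix W) i (τ i) = F0 := by
      rw [hF0, hfilter]
      refine Finset.prod_congr rfl fun i hi => ?_
      have hτi : τ i = i := by
        refine apply_noncommProd_not_mem hS fun hmem => ?_
        exact (Finset.mem_compl.mp hi) (hSb hmem)
      rw [hτi, Matrix.charmatrix_apply_eq]
    -- part over a cycle in S
    have hcycS : ∀ c ∈ S, ∏ i ∈ c.support, (Matrix.charmatrix W) i (τ i) =
        (-1) ^ c.support.card * C (Q c) := by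
      intro c hc
      have : ∀ i ∈ c.support, (Matrix.charmatrix W) i (τ i) = -(C (W i (σ i))) := by
        intro i hi
        have h2 : c i = σ i := (mem_cycleFactorsFinset_iff.mp (hS hc)).2 i hi
        have hne : i ≠ σ i := fun h => (mem_support.mp hi) (by rw [h2, ← h])
        rw [apply_noncommProd_mem hS hc hi, Matrix.charmatrix_apply_ne _ _ _ hne]
      rw [Finset.prod_congr rfl this]
      calc ∏ i ∈ c.support, -(C (W i (σ i)))
          = ∏ i ∈ c.support, ((-1) * C (W i (σ i))) := by simp only [neg_one_mul]
        _ = (-1) ^ c.support.card * C (Q c) := by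
            rw [Finset.prod_mul_distrib, Finset.prod_const, hQ, map_prod]
    -- part over a cycle not in S
    have hcycNS : ∀ c ∈ σ.cycleFactorsFinset \ S,
        ∏ i ∈ c.support, (Matrix.charmatrix W) i (τ i) = X ^ c.support.card := by
      intro c hc
      obtain ⟨hcf, hcS⟩ := Finset.mem_sdiff.mp hc
      have : ∀ i ∈ c.support, (Matrix.charmatrix W) i (τ i) = X := by
        intro i hi
        have hτi : τ i = i := by
          refine apply_noncommProd_not_mem hS fun hmem => ?_
          obtain ⟨c', hc'S, hic'⟩ := Finset.mem_biUnion.mp hmem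
          have e1 : c' = σ.cycleOf i := cycle_is_cycleOf hic' (hS hc'S)
          have e2 : c = σ.cycleOf i := cycle_is_cycleOf hi hcf
          exact hcS (e2 ▸ e1 ▸ hc'S)
        have h2 : c i = σ i := (mem_cycleFactorsFinset_iff.mp hcf).2 i hi
        have hne : i ≠ σ i := fun h => (mem_support.mp hi) (by rw [h2, ← h])
        rw [hτi, Matrix.charmatrix_apply_eq, hW i i hne, map_zero, sub_zero]
      rw [Finset.prod_congr rfl this, Finset.prod_const]
    -- assemble the big product
    have hprod : (∏ i, (Matrix.charmatrix W) i (τ i)) =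
        F0 * ((∏ c ∈ S, ((-1) ^ c.support.card * C (Q c))) *
          ∏ c ∈ σ.cycleFactorsFinset \ S, X ^ c.support.card) := by
      rw [← Finset.prod_mul_prod_compl σ.support
        (fun i => (Matrix.charmatrix W) i (τ i)), hfix, hsupp,
        Finset.prod_biUnion hdisj, ← Finset.prod_sdiff hS,
        Finset.prod_congr rfl hcycS, Finset.prod_congr rfl hcycNS]
      ring
    -- the sign
    have hsign : ((Equiv.Perm.sign τ : ℤ) : R[X]) =
        ∏ c ∈ S, ((Equiv.Perm.sign c : ℤ) : R[X]) := by
      rw [hτdef, sign_noncommProd' hS]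
      push_cast
      rfl
    rw [hprod, hsign]
    rw [show ∀ (a b d : R[X]) , a * (F0 * (b * d)) = F0 * ((a * b) * d) by intros; ring]
    congr 1
    congr 1
    rw [← Finset.prod_mul_distrib]
    refine Finset.prod_congr rfl fun c hc => ?_
    have hsc : Equiv.Perm.sign c = -(-1) ^ c.support.card :=
      (mem_cycleFactorsFinset_iff.mp (hS hc)).1.sign
    rw [hsc]
    push_cast
    rw [neg_mul, ← mul_assoc, ← pow_add, Even.neg_one_pow ⟨c.support.card, rfl⟩,
      one_mul]
  -- step 2: restrict the sum to admissible permutations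
  set P : Finset (Perm (Fin n)) :=
    Finset.univ.filter (fun τ => ∀ i, τ i = i ∨ τ i = σ i) with hP
  have h2 : W.charpoly = ∑ τ ∈ P,
      ((Equiv.Perm.sign τ : ℤ) : R[X]) * ∏ i, (Matrix.charmatrix W) i (τ i) := by
    rw [h1]
    refine (Finset.sum_subset (Finset.subset_univ P) fun τ _ hτP => ?_).symm
    rw [hP, Finset.mem_filter] at hτP
    push_neg at hτP
    obtain ⟨i, hi1, hi2⟩ := hτP (Finset.mem_univ τ)
    have : (Matrix.charmatrix W) i (τ i) = 0 := by
      rw [Matrix.charmatrix_apply_ne _ _ _ (Ne.symm hi1), hW i (τ i) hi2, map_zero,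
        neg_zero]
    rw [Finset.prod_eq_zero (Finset.mem_univ i) this, mul_zero]
  -- step 3: reindex by subsets of the cycle factors
  have h3 : ∑ τ ∈ P,
      ((Equiv.Perm.sign τ : ℤ) : R[X]) * ∏ i, (Matrix.charmatrix W) i (τ i) =
      ∑ S ∈ σ.cycleFactorsFinset.powerset,
        F0 * ((∏ c ∈ S, (-(C (Q c)))) *
          ∏ c ∈ σ.cycleFactorsFinset \ S, X ^ c.support.card) := by
    refine (Finset.sum_bij
      (fun S hSmem => S.noncommProd id (comm_of_subset (Finset.mem_powerset.mp hSmem)))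
      ?_ ?_ ?_ ?_).symm
    · intro S hSmem
      have hS := Finset.mem_powerset.mp hSmem
      rw [hP, Finset.mem_filter]
      refine ⟨Finset.mem_univ _, fun i => ?_⟩
      by_cases hx : i ∈ S.biUnion Equiv.Perm.support
      · obtain ⟨c, hcS, hic⟩ := Finset.mem_biUnion.mp hx
        exact Or.inr (apply_noncommProd_mem hS hcS hic)
      · exact Or.inl (apply_noncommProd_not_mem hS hx)
    · intro S1 h1' S2 h2' heq
      have e1 := cff_noncommProd (Finset.mem_powerset.mp h1')
      have e2 := cff_noncommProd (Finset.mem_powerset.mp h2')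
      rw [← e1, ← e2]
      exact congrArg Equiv.Perm.cycleFactorsFinset heq
    · intro τ hτP
      rw [hP, Finset.mem_filter] at hτP
      obtain ⟨S, hS, hEq⟩ := classify hτP.2
      exact ⟨S, Finset.mem_powerset.mpr hS, hEq.symm⟩
    · intro S hSmem
      exact (hterm S (Finset.mem_powerset.mp hSmem)).symm
  -- step 4: final algebra
  rw [h2, h3, ← Finset.mul_sum, ← Finset.prod_add]
  congr 1
  refine Finset.prod_congr rfl fun c hc => ?_
  rw [neg_add_eq_sub]
  congr 2
  rw [cycle_traverse_prod (mem_cycleFactorsFinset_iff.mp hc).1 (hm c hc) W]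
  exact Finset.prod_congr rfl fun i hi =>
    by rw [(mem_cycleFactorsFinset_iff.mp hc).2 i hi]
end
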